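/- Let λ > 0 and define, for ρ > 0 and ζ > 0, U(ρ, ζ) = −(λ/(2π)) ∫_{−1}^{1} (1 − t²) · Re[((it − ζ)² + ρ²)^{−1/2}] dt, where the principal branch of the complex square root is used (the radicand ρ² + ζ² − t² − 2itζ never lies on the nonpositive real axis for ζ > 0). Then U satisfies the axisymmetric Laplace equation ∂²U/∂ρ² + (1/ρ)∂U/∂ρ + ∂²U/∂ζ² = 0 on the region ρ > 0, ζ > 0. -/

import Mathlib

open MeasureTheory Complex

noncomputable def Aker (t x y : ℝ) : ℂ := (Complex.I*(t:ℂ) - (y:ℂ))^2 + ((x:ℂ))^2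

lemma Aker_re (t x y : ℝ) : (Aker t x y).re = x^2 + y^2 - t^2 := by
  simp [Aker, sq, Complex.mul_re, Complex.mul_im]; ring

lemma Aker_im (t x y : ℝ) : (Aker t x y).im = -2*t*y := by
  simp [Aker, sq, Complex.mul_re, Complex.mul_im]; ring

lemma Aker_slit (t x : ℝ) {y : ℝ} (hy : 0 < y) : Aker t x y ∈ Complex.slitPlane := by
  rw [Complex.mem_slitPlane_iff, Aker_re, Aker_im]
  rcases eq_or_ne t 0 with rfl | ht
  · left; nlinarith
  · right; positivity

lemma Aker_ne_zero (t x : ℝ) {y : ℝ} (hy : 0 < y) : Aker t x y ≠ 0 :=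
  Complex.slitPlane_ne_zero (Aker_slit t x hy)

lemma contA_pair (y : ℝ) : Continuous fun q : ℝ × ℝ => Aker q.2 q.1 y := by
  unfold Aker; fun_prop

lemma contA_pair' (x : ℝ) : Continuous fun q : ℝ × ℝ => Aker q.2 x q.1 := by
  unfold Aker; fun_prop

lemma hasDerivAt_ofReal (x : ℝ) : HasDerivAt (fun x : ℝ => (x:ℂ)) 1 x := by
  simpa using (hasDerivAt_id x).ofReal_comp

lemma hasDerivAt_Aker_x (t y x : ℝ) : HasDerivAt (fun x : ℝ => Aker t x y) (2*(x:ℂ)) x := by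
  have h := (((hasDerivAt_ofReal x).mul (hasDerivAt_ofReal x)).const_add
    ((Complex.I*(t:ℂ) - (y:ℂ))^2))
  have h2 : (fun x:ℝ => (Complex.I*(t:ℂ) - (y:ℂ))^2 + (x:ℂ)*(x:ℂ))
      = fun x:ℝ => Aker t x y := by funext x'; rw [Aker]; ring
  simp only [Pi.mul_apply] at h
  rw [h2] at h
  exact h.congr_deriv (by ring)

lemma hasDerivAt_Aker_y (t x y : ℝ) :
    HasDerivAt (fun y : ℝ => Aker t x y) (-2*(Complex.I*(t:ℂ) - (y:ℂ))) y := by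
  have hw : ∀ y : ℝ, HasDerivAt (fun y : ℝ => (Complex.I*(t:ℂ) - (y:ℂ))) (-1) y := by
    intro y
    have := (hasDerivAt_ofReal y).const_sub (Complex.I*(t:ℂ))
    simpa using this
  have h := (((hw y).mul (hw y)).add_const (((x:ℂ))^2))
  have h2 : (fun y:ℝ => (Complex.I*(t:ℂ) - (y:ℂ))*(Complex.I*(t:ℂ) - (y:ℂ)) + ((x:ℂ))^2)
      = fun y:ℝ => Aker t x y := by funext y'; rw [Aker]; ring
  simp only [Pi.mul_apply] at h
  rw [h2] at h
  exact h.congr_deriv (by ring)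

lemma hasDerivAt_re {f : ℝ → ℂ} {f' : ℂ} {x : ℝ} (h : HasDerivAt f f' x) :
    HasDerivAt (fun x => (f x).re) f'.re x := by
  exact (Complex.reCLM.hasFDerivAt.comp_hasDerivAt x h)

lemma hasDerivAt_cpow_comp {f : ℝ → ℂ} {f' : ℂ} {x : ℝ} (c : ℂ) (hf : HasDerivAt f f' x)
    (h0 : f x ∈ Complex.slitPlane) :
    HasDerivAt (fun x => f x ^ c) (c * f x ^ (c-1) * f') x := by
  have h := (Complex.hasStrictDerivAt_cpow_const (c := c) h0).hasDerivAt
  have h2 := (h.hasFDerivAt.restrictScalars ℝ).comp_hasDerivAt x hf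
  exact h2.congr_deriv (by
    rw [ContinuousLinearMap.coe_restrictScalars', ContinuousLinearMap.toSpanSingleton_apply, smul_eq_mul]
    ring)

noncomputable def K0 (t x y : ℝ) : ℝ := (1 - t^2) * ((Aker t x y) ^ (-(1/2:ℂ))).re
noncomputable def K1 (t x y : ℝ) : ℝ :=
  (1 - t^2) * ((-(x:ℂ)) * (Aker t x y) ^ (-(3/2):ℂ)).re
noncomputable def K2 (t x y : ℝ) : ℝ :=
  (1 - t^2) * (-((Aker t x y) ^ (-(3/2):ℂ)) + 3*(x:ℂ)^2 * (Aker t x y) ^ (-(5/2):ℂ)).re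
noncomputable def L1 (t x y : ℝ) : ℝ :=
  (1 - t^2) * ((Complex.I*(t:ℂ) - (y:ℂ)) * (Aker t x y) ^ (-(3/2):ℂ)).re
noncomputable def L2 (t x y : ℝ) : ℝ :=
  (1 - t^2) * (-((Aker t x y) ^ (-(3/2):ℂ))
    + 3*(Complex.I*(t:ℂ) - (y:ℂ))^2 * (Aker t x y) ^ (-(5/2):ℂ)).re

lemma hK01 (t x : ℝ) {y : ℝ} (hy : 0 < y) :
    HasDerivAt (fun x => K0 t x y) (K1 t x y) x := by
  have hc : HasDerivAt (fun x : ℝ => Aker t x y ^ (-(1/2:ℂ)))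
      ((-(1/2:ℂ)) * Aker t x y ^ (-(1/2:ℂ)-1) * (2*(x:ℂ))) x :=
    hasDerivAt_cpow_comp _ (hasDerivAt_Aker_x t y x) (Aker_slit t x hy)
  have h2 : (-(x:ℂ)) * (Aker t x y) ^ (-(3/2):ℂ)
      = (-(1/2:ℂ)) * Aker t x y ^ (-(1/2:ℂ)-1) * (2*(x:ℂ)) := by
    rw [show (-(1/2:ℂ)-1) = -(3/2:ℂ) by norm_num]; ring
  unfold K0 K1
  rw [h2]
  exact (hasDerivAt_re hc).const_mul _

lemma hK12 (t x : ℝ) {y : ℝ} (hy : 0 < y) :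
    HasDerivAt (fun x => K1 t x y) (K2 t x y) x := by
  have hm : HasDerivAt (fun x : ℝ => -(x:ℂ)) (-1) x := (hasDerivAt_ofReal x).neg
  have hp : HasDerivAt (fun x : ℝ => Aker t x y ^ (-(3/2:ℂ)))
      ((-(3/2:ℂ)) * Aker t x y ^ (-(3/2:ℂ)-1) * (2*(x:ℂ))) x :=
    hasDerivAt_cpow_comp _ (hasDerivAt_Aker_x t y x) (Aker_slit t x hy)
  have hmul := hm.mul hp
  have h2 : -((Aker t x y) ^ (-(3/2):ℂ)) + 3*(x:ℂ)^2 * (Aker t x y) ^ (-(5/2):ℂ)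
      = (-1) * Aker t x y ^ (-(3/2):ℂ)
        + (-(x:ℂ)) * ((-(3/2:ℂ)) * Aker t x y ^ (-(3/2:ℂ)-1) * (2*(x:ℂ))) := by
    rw [show (-(3/2:ℂ)-1) = -(5/2:ℂ) by norm_num]; ring
  unfold K1 K2
  rw [h2]
  exact (hasDerivAt_re hmul).const_mul _

lemma hL01 (t x : ℝ) {y : ℝ} (hy : 0 < y) :
    HasDerivAt (fun y => K0 t x y) (L1 t x y) y := by
  have hc : HasDerivAt (fun y : ℝ => Aker t x y ^ (-(1/2:ℂ)))
      ((-(1/2:ℂ)) * Aker t x y ^ (-(1/2:ℂ)-1) * (-2*(Complex.I*(t:ℂ) - (y:ℂ)))) y :=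
    hasDerivAt_cpow_comp _ (hasDerivAt_Aker_y t x y) (Aker_slit t x hy)
  have h2 : (Complex.I*(t:ℂ) - (y:ℂ)) * (Aker t x y) ^ (-(3/2):ℂ)
      = (-(1/2:ℂ)) * Aker t x y ^ (-(1/2:ℂ)-1) * (-2*(Complex.I*(t:ℂ) - (y:ℂ))) := by
    rw [show (-(1/2:ℂ)-1) = -(3/2:ℂ) by norm_num]; ring
  unfold K0 L1
  rw [h2]
  exact (hasDerivAt_re hc).const_mul _

lemma hL12 (t x : ℝ) {y : ℝ} (hy : 0 < y) :
    HasDerivAt (fun y => L1 t x y) (L2 t x y) y := by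
  have hm : HasDerivAt (fun y : ℝ => (Complex.I*(t:ℂ) - (y:ℂ))) (-1) y := by
    simpa using (hasDerivAt_ofReal y).const_sub (Complex.I*(t:ℂ))
  have hp : HasDerivAt (fun y : ℝ => Aker t x y ^ (-(3/2:ℂ)))
      ((-(3/2:ℂ)) * Aker t x y ^ (-(3/2:ℂ)-1) * (-2*(Complex.I*(t:ℂ) - (y:ℂ)))) y :=
    hasDerivAt_cpow_comp _ (hasDerivAt_Aker_y t x y) (Aker_slit t x hy)
  have hmul := hm.mul hp
  have h2 : -((Aker t x y) ^ (-(3/2):ℂ))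
        + 3*(Complex.I*(t:ℂ) - (y:ℂ))^2 * (Aker t x y) ^ (-(5/2):ℂ)
      = (-1) * Aker t x y ^ (-(3/2):ℂ)
        + (Complex.I*(t:ℂ) - (y:ℂ)) * ((-(3/2:ℂ)) * Aker t x y ^ (-(3/2:ℂ)-1)
            * (-2*(Complex.I*(t:ℂ) - (y:ℂ)))) := by
    rw [show (-(3/2:ℂ)-1) = -(5/2:ℂ) by norm_num]; ring
  unfold L1 L2
  rw [h2]
  exact (hasDerivAt_re hmul).const_mul _

lemma pointwiseLaplace (t : ℝ) {x y : ℝ} (hx : x ≠ 0) (hy : 0 < y) :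
    K2 t x y + K1 t x y / x + L2 t x y = 0 := by
  have hA0 := Aker_ne_zero t x hy
  have key : (Aker t x y) ^ (-(3/2):ℂ) = (Aker t x y) ^ (-(5/2):ℂ) * Aker t x y := by
    rw [show (-(3/2):ℂ) = (-(5/2)) + 1 by norm_num, Complex.cpow_add _ _ hA0, Complex.cpow_one]
  have h1 : K1 t x y / x = (1 - t^2) * (-(((Aker t x y) ^ (-(3/2):ℂ)).re)) := by
    unfold K1
    rw [show ((-(x:ℂ)) * (Aker t x y) ^ (-(3/2):ℂ)).re
        = -x * ((Aker t x y) ^ (-(3/2):ℂ)).re by simp [Complex.mul_re]]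
    field_simp
  have h2 : (-((Aker t x y) ^ (-(3/2):ℂ)) + 3*(x:ℂ)^2 * (Aker t x y) ^ (-(5/2):ℂ))
      + (-((Aker t x y) ^ (-(3/2):ℂ)))
      + (-((Aker t x y) ^ (-(3/2):ℂ))
          + 3*(Complex.I*(t:ℂ) - (y:ℂ))^2 * (Aker t x y) ^ (-(5/2):ℂ)) = 0 := by
    rw [key, Aker]; ring
  unfold K2 L2
  rw [h1]
  have h3 := congrArg Complex.re h2
  simp only [Complex.add_re, Complex.neg_re, Complex.zero_re] at h3 ⊢
  linear_combination (1 - t^2) * h3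

/-! Continuity lemmas -/

lemma cont_cpow_x {y : ℝ} (hy : 0 < y) (c : ℂ) :
    Continuous fun q : ℝ × ℝ => Aker q.2 q.1 y ^ c :=
  continuous_iff_continuousAt.2 fun q => by
    have h1 : ContinuousAt (fun z : ℂ => z ^ c) (Aker q.2 q.1 y) :=
      continuousAt_cpow_const (Aker_slit _ _ hy)
    exact ContinuousAt.comp (f := fun q : ℝ × ℝ => Aker q.2 q.1 y) (x := q) h1
      ((contA_pair y).continuousAt)

lemma contK0_x {y : ℝ} (hy : 0 < y) : Continuous fun q : ℝ × ℝ => K0 q.2 q.1 y := by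
  unfold K0
  exact (continuous_const.sub (continuous_snd.pow 2)).mul
    (Complex.continuous_re.comp (cont_cpow_x hy _))

lemma contK1_x {y : ℝ} (hy : 0 < y) : Continuous fun q : ℝ × ℝ => K1 q.2 q.1 y := by
  unfold K1
  exact (continuous_const.sub (continuous_snd.pow 2)).mul
    (Complex.continuous_re.comp
      (((Complex.continuous_ofReal.comp continuous_fst).neg).mul (cont_cpow_x hy _)))

lemma contK2_x {y : ℝ} (hy : 0 < y) : Continuous fun q : ℝ × ℝ => K2 q.2 q.1 y := by
  unfold K2
  exact (continuous_const.sub (continuous_snd.pow 2)).mul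
    (Complex.continuous_re.comp
      (((cont_cpow_x hy _).neg).add
        ((continuous_const.mul ((Complex.continuous_ofReal.comp continuous_fst).pow 2)).mul
          (cont_cpow_x hy _))))

lemma cont_cpow_y (x : ℝ) (c : ℂ) :
    ContinuousOn (fun q : ℝ × ℝ => Aker q.2 x q.1 ^ c) (Set.Ioi 0 ×ˢ Set.univ) := by
  intro q hq
  have h1 : ContinuousAt (fun z : ℂ => z ^ c) (Aker q.2 x q.1) :=
    continuousAt_cpow_const (Aker_slit _ _ hq.1)
  exact (ContinuousAt.comp (f := fun q : ℝ × ℝ => Aker q.2 x q.1) (x := q) h1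
    ((contA_pair' x).continuousAt)).continuousWithinAt

lemma contK0_y (x : ℝ) :
    ContinuousOn (fun q : ℝ × ℝ => K0 q.2 x q.1) (Set.Ioi 0 ×ˢ Set.univ) := by
  unfold K0
  exact ((continuous_const.sub (continuous_snd.pow 2)).continuousOn).mul
    (Complex.continuous_re.comp_continuousOn (cont_cpow_y x _))

lemma contL1_y (x : ℝ) :
    ContinuousOn (fun q : ℝ × ℝ => L1 q.2 x q.1) (Set.Ioi 0 ×ˢ Set.univ) := by
  unfold L1
  exact ((continuous_const.sub (continuous_snd.pow 2)).continuousOn).mul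
    (Complex.continuous_re.comp_continuousOn
      ((((continuous_const.mul (Complex.continuous_ofReal.comp continuous_snd)).sub
          (Complex.continuous_ofReal.comp continuous_fst)).continuousOn).mul (cont_cpow_y x _)))

lemma contL2_y (x : ℝ) :
    ContinuousOn (fun q : ℝ × ℝ => L2 q.2 x q.1) (Set.Ioi 0 ×ˢ Set.univ) := by
  unfold L2
  exact ((continuous_const.sub (continuous_snd.pow 2)).continuousOn).mul
    (Complex.continuous_re.comp_continuousOn
      (((cont_cpow_y x _).neg).add
        (((continuous_const.mul
            ((((continuous_const.mul (Complex.continuous_ofReal.comp continuous_snd)).sub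
              (Complex.continuous_ofReal.comp continuous_fst))).pow 2)).continuousOn).mul
          (cont_cpow_y x _))))

/-! Differentiation under the integral sign -/

lemma hasDerivAt_int (F F' : ℝ → ℝ → ℝ) (s : Set ℝ) (hs : IsOpen s)
    (hF : ContinuousOn (fun p : ℝ × ℝ => F p.1 p.2) (s ×ˢ Set.univ))
    (hF' : ContinuousOn (fun p : ℝ × ℝ => F' p.1 p.2) (s ×ˢ Set.univ))
    (hdiff : ∀ t : ℝ, ∀ x ∈ s, HasDerivAt (fun x => F x t) (F' x t) x)
    {x₀ : ℝ} (hx₀ : x₀ ∈ s) :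
    HasDerivAt (fun x => ∫ t in (-1:ℝ)..1, F x t) (∫ t in (-1:ℝ)..1, F' x₀ t) x₀ := by
  obtain ⟨ε, hε, hball⟩ : ∃ ε > 0, Metric.closedBall x₀ ε ⊆ s := by
    obtain ⟨ε, hε, h⟩ := Metric.isOpen_iff.mp hs x₀ hx₀
    exact ⟨ε/2, by positivity,
      (Metric.closedBall_subset_ball (by linarith)).trans h⟩
  have hcont : ∀ (G : ℝ → ℝ → ℝ),
      ContinuousOn (fun p : ℝ × ℝ => G p.1 p.2) (s ×ˢ Set.univ) →
      ∀ x ∈ s, Continuous (fun t => G x t) := by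
    intro G hG x hx
    rw [continuous_iff_continuousAt]
    intro t
    have h1 : ContinuousAt (fun p : ℝ × ℝ => G p.1 p.2) (x, t) :=
      hG.continuousAt ((hs.prod isOpen_univ).mem_nhds (by simp [hx]))
    exact h1.comp (Continuous.continuousAt (by fun_prop))
  have hKsub : Metric.closedBall x₀ ε ×ˢ Set.Icc (-1:ℝ) 1 ⊆ s ×ˢ Set.univ :=
    Set.prod_mono hball (Set.subset_univ _)
  obtain ⟨C, hC⟩ := ((isCompact_closedBall x₀ ε).prod isCompact_Icc).exists_bound_of_continuousOn
      (hF'.mono hKsub)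
  have hIsub : Set.uIoc (-1:ℝ) 1 ⊆ Set.Icc (-1:ℝ) 1 := by
    rw [Set.uIoc_of_le (by norm_num)]
    exact Set.Ioc_subset_Icc_self
  have := (intervalIntegral.hasDerivAt_integral_of_dominated_loc_of_deriv_le
    (F := F) (F' := F') (bound := fun _ => C) (μ := volume) (a := (-1:ℝ)) (b := 1) (Metric.ball_mem_nhds x₀ hε)
    (Filter.eventually_of_mem (hs.mem_nhds hx₀) (fun x hx =>
      ((hcont F hF x hx).aestronglyMeasurable)))
    ((hcont F hF x₀ hx₀).intervalIntegrable _ _)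
    ((hcont F' hF' x₀ hx₀).aestronglyMeasurable)
    (Filter.Eventually.of_forall (fun t ht x hx =>
      hC (x, t) ⟨Metric.ball_subset_closedBall hx, hIsub ht⟩))
    intervalIntegrable_const
    (Filter.Eventually.of_forall (fun t _ x hx =>
      hdiff t x (hball (Metric.ball_subset_closedBall hx)))))
  exact this.2

/-- Newtonian (Maclaurin) limit: let `λ > 0` and define, for `ρ > 0`, `ζ > 0`,
`U(ρ, ζ) = −(λ/(2π)) ∫_{−1}^{1} (1 − t²)·Re[((it − ζ)² + ρ²)^{−1/2}] dt`,
using the principal branch of the complex power.  Then `U` satisfies the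
axisymmetric Laplace equation `U_ρρ + U_ρ/ρ + U_ζζ = 0` on `ρ > 0, ζ > 0`. -/
theorem stmt16 (lam : ℝ) (hlam : 0 < lam) (U : ℝ → ℝ → ℝ)
    (hU : ∀ ρ ζ : ℝ, U ρ ζ = -(lam/(2*Real.pi)) *
      ∫ t in (-1:ℝ)..(1:ℝ), (1 - t^2) *
        (((Complex.I*(t : ℂ) - (ζ : ℂ))^2 + ((ρ : ℂ))^2) ^ (-(1/2 : ℂ))).re) :
    ∀ ρ ζ : ℝ, 0 < ρ → 0 < ζ →
      deriv (fun x : ℝ => deriv (fun x' : ℝ => U x' ζ) x) ρ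
        + (deriv (fun x : ℝ => U x ζ) ρ) / ρ
        + deriv (fun y : ℝ => deriv (fun y' : ℝ => U ρ y') y) ζ = 0 := by
  intro ρ ζ hρ hζ
  set cst := -(lam/(2*Real.pi)) with hcst
  have hUK : ∀ x y : ℝ, U x y = cst * ∫ t in (-1:ℝ)..1, K0 t x y := by
    intro x y; rw [hU]; rfl
  -- ρ-direction
  have dx1 : ∀ x : ℝ, HasDerivAt (fun x' : ℝ => U x' ζ)
      (cst * ∫ t in (-1:ℝ)..1, K1 t x ζ) x := by
    intro x
    have h := hasDerivAt_int (fun x t => K0 t x ζ) (fun x t => K1 t x ζ) Set.univ isOpen_univ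
      ((contK0_x hζ).continuousOn) ((contK1_x hζ).continuousOn)
      (fun t x _ => hK01 t x hζ) (Set.mem_univ x)
    have h2 := h.const_mul cst
    simp only [← hUK] at h2
    exact h2
  have dx2 : HasDerivAt (fun x : ℝ => cst * ∫ t in (-1:ℝ)..1, K1 t x ζ)
      (cst * ∫ t in (-1:ℝ)..1, K2 t ρ ζ) ρ :=
    (hasDerivAt_int (fun x t => K1 t x ζ) (fun x t => K2 t x ζ) Set.univ isOpen_univ
      ((contK1_x hζ).continuousOn) ((contK2_x hζ).continuousOn)
      (fun t x _ => hK12 t x hζ) (Set.mem_univ ρ)).const_mul cst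
  have hd1 : (fun x : ℝ => deriv (fun x' : ℝ => U x' ζ) x)
      = fun x => cst * ∫ t in (-1:ℝ)..1, K1 t x ζ := funext fun x => (dx1 x).deriv
  -- ζ-direction
  have dy1 : ∀ y ∈ Set.Ioi (0:ℝ), HasDerivAt (fun y' : ℝ => U ρ y')
      (cst * ∫ t in (-1:ℝ)..1, L1 t ρ y) y := by
    intro y hy
    have h := hasDerivAt_int (fun y t => K0 t ρ y) (fun y t => L1 t ρ y) (Set.Ioi 0) isOpen_Ioi
      (contK0_y ρ) (contL1_y ρ) (fun t y hy => hL01 t ρ hy) hy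
    have h2 := h.const_mul cst
    simp only [← hUK] at h2
    exact h2
  have dy2 : HasDerivAt (fun y : ℝ => cst * ∫ t in (-1:ℝ)..1, L1 t ρ y)
      (cst * ∫ t in (-1:ℝ)..1, L2 t ρ ζ) ζ :=
    (hasDerivAt_int (fun y t => L1 t ρ y) (fun y t => L2 t ρ y) (Set.Ioi 0) isOpen_Ioi
      (contL1_y ρ) (contL2_y ρ) (fun t y hy => hL12 t ρ hy) hζ).const_mul cst
  have heq : (fun y : ℝ => deriv (fun y' : ℝ => U ρ y') y)
      =ᶠ[nhds ζ] (fun y => cst * ∫ t in (-1:ℝ)..1, L1 t ρ y) := by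
    filter_upwards [Ioi_mem_nhds hζ] with y hy
    exact (dy1 y hy).deriv
  have e2 : deriv (fun y : ℝ => deriv (fun y' : ℝ => U ρ y') y) ζ
      = cst * ∫ t in (-1:ℝ)..1, L2 t ρ ζ := by
    rw [heq.deriv_eq]; exact dy2.deriv
  have e1 : deriv (fun x : ℝ => deriv (fun x' : ℝ => U x' ζ) x) ρ
      = cst * ∫ t in (-1:ℝ)..1, K2 t ρ ζ := by
    rw [hd1]; exact dx2.deriv
  have e0 : deriv (fun x : ℝ => U x ζ) ρ = cst * ∫ t in (-1:ℝ)..1, K1 t ρ ζ := (dx1 ρ).deriv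
  rw [e0, e1, e2]
  -- integrability
  have hpt : Continuous fun t : ℝ => ((ρ, t) : ℝ × ℝ) := by fun_prop
  have hpt' : Continuous fun t : ℝ => ((ζ, t) : ℝ × ℝ) := by fun_prop
  have intK1 : IntervalIntegrable (fun t => K1 t ρ ζ) volume (-1) 1 :=
    ((contK1_x hζ).comp hpt).intervalIntegrable _ _
  have intK2 : IntervalIntegrable (fun t => K2 t ρ ζ) volume (-1) 1 :=
    ((contK2_x hζ).comp hpt).intervalIntegrable _ _
  have intL2 : IntervalIntegrable (fun t => L2 t ρ ζ) volume (-1) 1 := by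
    have : Continuous fun t => L2 t ρ ζ := by
      rw [continuous_iff_continuousAt]
      intro t
      exact ((contL2_y ρ).continuousAt
        ((isOpen_Ioi.prod isOpen_univ).mem_nhds (by simp [hζ]))).comp hpt'.continuousAt
    exact this.intervalIntegrable _ _
  have key : ∫ t in (-1:ℝ)..1, (K2 t ρ ζ + K1 t ρ ζ / ρ + L2 t ρ ζ) = 0 := by
    have hz : ∀ t : ℝ, K2 t ρ ζ + K1 t ρ ζ / ρ + L2 t ρ ζ = 0 :=
      fun t => pointwiseLaplace t (ne_of_gt hρ) hζ
    simp only [hz, intervalIntegral.integral_zero]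
  have split : ∫ t in (-1:ℝ)..1, (K2 t ρ ζ + K1 t ρ ζ / ρ + L2 t ρ ζ)
      = (∫ t in (-1:ℝ)..1, K2 t ρ ζ) + (∫ t in (-1:ℝ)..1, K1 t ρ ζ)/ρ
        + ∫ t in (-1:ℝ)..1, L2 t ρ ζ := by
    rw [intervalIntegral.integral_add (intK2.add (intK1.div_const ρ)) intL2,
        intervalIntegral.integral_add intK2 (intK1.div_const ρ),
        intervalIntegral.integral_div]
  have : cst * (∫ t in (-1:ℝ)..1, K2 t ρ ζ) + (cst * ∫ t in (-1:ℝ)..1, K1 t ρ ζ)/ρ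
      + cst * (∫ t in (-1:ℝ)..1, L2 t ρ ζ)
      = cst * ((∫ t in (-1:ℝ)..1, K2 t ρ ζ) + (∫ t in (-1:ℝ)..1, K1 t ρ ζ)/ρ
        + ∫ t in (-1:ℝ)..1, L2 t ρ ζ) := by ring
  rw [this, ← split, key, mul_zero]
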